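/- Let p be a prime number and let G and H be finite p-groups, with α : G →* MulAut H an action of G on H by automorphisms. Suppose there is at least one non-trivial orbit, and let p^s be the minimal size of a non-trivial orbit. Let H^G be the fixed-point subgroup and c(p^s) the number of orbits of size p^s. Then exactly one of the following holds: (1) |H^G| = p^s and c(p^s) ≡ p − 1 (mod p(p−1)); (2) |H^G| > p^s and c(p^s) ≡ 0 (mod p(p−1)). -/
import Mathlib


/-- The orbit of `a : H` under the action of `G` on `H` via `α`. -/
def orbitOf {G H : Type*} [Group G] [Group H] (α : G →* MulAut H) (a : H) : Set H :=
  Set.range fun g : G => α g a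


open MulAction in
theorem free_action_card_dvd {C S : Type*} [Group C] [Finite C] [MulAction C S] [Finite S]
    (h : ∀ (c : C) (x : S), c • x = x → c = 1) : Nat.card C ∣ Nat.card S := by
  classical
  cases nonempty_fintype C
  cases nonempty_fintype S
  have hFT : ∀ a : C, Fintype (fixedBy S a) := fun a => Fintype.ofFinite _
  have hFTΩ : Fintype (orbitRel.Quotient C S) := Fintype.ofFinite _
  have hb := MulAction.sum_card_fixedBy_eq_card_orbits_mul_card_group C S
  have hsum : (∑ a : C, Fintype.card (fixedBy S a)) = Fintype.card S := by
    rw [Finset.sum_eq_single 1]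
    · exact Fintype.card_congr (Equiv.subtypeUnivEquiv (fun x => by
        simp [MulAction.mem_fixedBy]))
    · intro b _ hb1
      have : IsEmpty (fixedBy S b) := ⟨fun x => hb1 (h b x x.2)⟩
      exact Fintype.card_eq_zero
    · simp
  rw [hsum] at hb
  simp only [Nat.card_eq_fintype_card]
  exact ⟨_, hb.trans (mul_comm _ _)⟩

theorem perm_free_dvd_card {S : Type*} [Finite S] {d : ℕ} (hd : 0 < d) (f : Equiv.Perm S)
    (hfd : f ^ d = 1) (hfree : ∀ j, 0 < j → j < d → ∀ x : S, (f ^ j) x ≠ x) :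
    d ∣ Nat.card S := by
  classical
  rcases isEmpty_or_nonempty S with hS | hS
  · simp [Nat.card_of_isEmpty]
  have hof : orderOf f ∣ d := orderOf_dvd_of_pow_eq_one hfd
  have hofpos : 0 < orderOf f := orderOf_pos f
  have hofd : orderOf f = d := by
    rcases Nat.lt_or_ge (orderOf f) d with hlt | hge
    · exact absurd (pow_orderOf_eq_one f) (by
        intro h1
        exact hfree (orderOf f) hofpos hlt (Classical.arbitrary S)
          (by rw [h1]; rfl))
    · exact le_antisymm (Nat.le_of_dvd hd hof) hge
  have hfreeC : ∀ (c : Subgroup.zpowers f) (x : S), c • x = x → c = 1 := by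
    rintro ⟨g, hg⟩ x hcx
    obtain ⟨k, hk⟩ := (mem_powers_iff_mem_zpowers).mpr hg
    have hred : f ^ (k % d) = g := by
      have h1 : f ^ k = g := hk
      rw [← h1, ← hofd, pow_mod_orderOf]
    have hx : (f ^ (k % d)) x = x := by
      have : (g : Equiv.Perm S) x = x := hcx
      rw [hred]; exact this
    have hk0 : k % d = 0 := by
      by_contra h0
      exact hfree (k % d) (Nat.pos_of_ne_zero h0) (Nat.mod_lt _ hd) x hx
    apply Subtype.ext
    show g = (1 : Equiv.Perm S)
    rw [← hred, hk0, pow_zero]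
  have := free_action_card_dvd hfreeC
  rwa [Nat.card_zpowers, hofd] at this


section OrbitBasics

variable {G H : Type*} [Group G] [Group H] (α : G →* MulAut H)

theorem mem_orbitOf_self (a : H) : a ∈ orbitOf α a :=
  ⟨1, by simp⟩

theorem orbitOf_eq_of_mem {a x : H} (h : x ∈ orbitOf α a) : orbitOf α x = orbitOf α a := by
  obtain ⟨g, rfl⟩ := h
  ext y
  constructor
  · rintro ⟨g', rfl⟩
    exact ⟨g' * g, by simp [map_mul]⟩
  · rintro ⟨g', rfl⟩
    exact ⟨g' * g⁻¹, by simp [map_mul, ← MulAut.mul_apply]⟩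

theorem image_pow_orbitOf (m : ℕ) (a : H) :
    (fun x : H => x ^ m) '' orbitOf α a = orbitOf α (a ^ m) := by
  ext y
  simp only [orbitOf, Set.image, Set.mem_range, Set.mem_setOf_eq]
  constructor
  · rintro ⟨x, ⟨g, rfl⟩, rfl⟩
    exact ⟨g, by simp [map_pow]⟩
  · rintro ⟨g, rfl⟩
    exact ⟨α g a, ⟨g, rfl⟩, by simp [map_pow]⟩

theorem orbitOf_eq_singleton_iff {a : H} : orbitOf α a = {a} ↔ ∀ g : G, α g a = a := by
  constructor
  · intro h g
    have : α g a ∈ orbitOf α a := ⟨g, rfl⟩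
    rw [h] at this
    exact this
  · intro h
    ext y
    constructor
    · rintro ⟨g, rfl⟩; simp [h g]
    · rintro rfl; exact mem_orbitOf_self α _

theorem orbitOf_one : orbitOf (H := H) α 1 = {1} :=
  (orbitOf_eq_singleton_iff α).mpr fun g => by simp

theorem ncard_orbitOf_dvd [Finite G] [Finite H] (a : H) :
    (orbitOf α a).ncard ∣ Nat.card G := by
  letI := MulAction.compHom H α
  have horb : orbitOf α a = MulAction.orbit G a := by
    ext y
    simp [orbitOf, MulAction.orbit, MulAction.compHom_smul_def]
  rw [← Nat.card_coe_set_eq, horb,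
    Nat.card_congr (MulAction.orbitEquivQuotientStabilizer G a)]
  exact Subgroup.card_quotient_dvd_card _

end OrbitBasics

theorem cop_pred (p : ℕ) (hp : 0 < p) : Nat.Coprime (p - 1) p := by
  have h : p = (p - 1) + 1 := by omega
  nth_rewrite 2 [h]
  rw [Nat.coprime_self_add_right]
  exact Nat.coprime_one_right _

theorem exists_K {p n : ℕ} (hp : p.Prime) (hn : 0 < n) :
    ∃ K : ℕ, 0 < K ∧ K ^ (p - 1) ≡ 1 [MOD p ^ n] ∧ orderOf ((K : ZMod p)) = p - 1 := by
  haveI : Fact p.Prime := ⟨hp⟩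
  obtain ⟨g, hg⟩ := IsCyclic.exists_generator (α := (ZMod p)ˣ)
  have horder : orderOf g = p - 1 := by
    rw [orderOf_eq_card_of_forall_mem_zpowers hg, Nat.card_eq_fintype_card,
      ZMod.card_units_eq_totient, Nat.totient_prime hp]
  have hco : Nat.Coprime ((g : ZMod p)).val p := ZMod.val_coe_unit_coprime g
  have hc1 : Nat.Coprime (p - 1) p := cop_pred p hp.pos
  refine ⟨((g : ZMod p)).val ^ (p ^ (n - 1)), ?_, ?_, ?_⟩
  · apply pow_pos
    apply Nat.pos_of_ne_zero
    intro h
    have : (g : ZMod p) = 0 := by rwa [ZMod.val_eq_zero] at h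
    exact g.ne_zero this
  · have h1 : (((g : ZMod p)).val ^ (p ^ (n - 1))) ^ (p - 1)
        = ((g : ZMod p)).val ^ (p ^ (n - 1) * (p - 1)) := by rw [pow_mul]
    rw [h1, ← Nat.totient_prime_pow hp hn]
    exact Nat.ModEq.pow_totient (hco.pow_right _)
  · push_cast
    rw [ZMod.natCast_rightInverse _]
    have h2 : ((g : ZMod p)) ^ (p ^ (n - 1)) = ((g ^ (p ^ (n - 1)) : (ZMod p)ˣ) : ZMod p) := by
      push_cast; rfl
    rw [h2, orderOf_units, orderOf_pow, horder, Nat.Coprime.gcd_eq_one, Nat.div_one]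
    exact hc1.pow_right _



theorem key_dvd {G H : Type*} [Group G] [Group H] [Finite G] [Finite H]
    {p : ℕ} (hp : p.Prime) (hH : IsPGroup p H)
    (α : G →* MulAut H) (s : ℕ) (hs1 : 1 < p ^ s) (hcard : 1 < Nat.card H) :
    (p - 1) ∣ Nat.card {L : Set H // (∃ a : H, L = orbitOf α a) ∧ L.ncard = p ^ s} := by
  classical
  haveI : Fact p.Prime := ⟨hp⟩
  obtain ⟨n, hn⟩ := IsPGroup.iff_card.mp hH
  have hn1 : 0 < n := by
    rcases Nat.eq_zero_or_pos n with h | h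
    · rw [h, pow_zero] at hn; omega
    · exact h
  obtain ⟨K, hKpos, hK1, hKord⟩ := exists_K hp hn1
  have hp1 : 0 < p - 1 := by have := hp.two_le; omega
  have hpowmod : ∀ (x : H) (a b : ℕ), a ≡ b [MOD p ^ n] → x ^ a = x ^ b := by
    intro x a b hab
    have hx : orderOf x ∣ p ^ n := hn ▸ orderOf_dvd_natCard x
    exact pow_eq_pow_iff_modEq.mpr (hab.of_dvd hx)
  have hKm : ∀ m : ℕ, (p - 1) ∣ m → ∀ x : H, x ^ K ^ m = x := by
    rintro m ⟨q, rfl⟩ x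
    have h1 : K ^ ((p - 1) * q) ≡ 1 [MOD p ^ n] := by
      rw [pow_mul]
      have := hK1.pow q
      simpa using this
    have := hpowmod x (K ^ ((p - 1) * q)) 1 h1
    simpa using this
  have hτcomp : ∀ (a b : ℕ) (x : H), (x ^ K ^ a) ^ K ^ b = x ^ K ^ (a + b) := by
    intro a b x; rw [← pow_mul, ← pow_add]
  have hτinj : ∀ m : ℕ, Function.Injective (fun x : H => x ^ K ^ m) := by
    intro m x y hxy
    have hexp : m + m * (p - 2) = (p - 1) * m := by
      have h2 := hp.two_le
      zify [h2, hp.pos]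
      ring
    have h2 : ∀ z : H, (z ^ K ^ m) ^ K ^ (m * (p - 2)) = z := by
      intro z
      rw [hτcomp, hexp]
      exact hKm _ ⟨m, rfl⟩ z
    have := h2 x
    rw [show (fun x : H => x ^ K ^ m) x = x ^ K ^ m from rfl] at hxy
    rw [hxy] at this
    rw [h2 y] at this
    exact this.symm
  set S := {L : Set H // (∃ a : H, L = orbitOf α a) ∧ L.ncard = p ^ s} with hSdef
  have hΦmemS : ∀ (m : ℕ) (L : S),
      (∃ a : H, (fun x : H => x ^ K ^ m) '' L.1 = orbitOf α a) ∧
        ((fun x : H => x ^ K ^ m) '' L.1).ncard = p ^ s := by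
    rintro m ⟨L, ⟨a, rfl⟩, hLc⟩
    refine ⟨⟨a ^ K ^ m, image_pow_orbitOf α (K ^ m) a⟩, ?_⟩
    rw [Set.ncard_image_of_injective _ (hτinj m)]
    exact hLc
  have hσex : ∃ σS : Equiv.Perm S, ∀ L : S, ((σS L) : Set H) = (fun x : H => x ^ K ^ 1) '' L.1 := by
    refine ⟨⟨fun L => ⟨_, hΦmemS 1 L⟩, fun L => ⟨_, hΦmemS (p - 2) L⟩, ?_, ?_⟩, fun L => rfl⟩
    · intro L
      apply Subtype.ext
      show (fun x : H => x ^ K ^ (p - 2)) '' ((fun x : H => x ^ K ^ 1) '' L.1) = L.1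
      rw [Set.image_image]
      have he : ∀ x : H, (x ^ K ^ 1) ^ K ^ (p - 2) = x := by
        intro x
        rw [hτcomp]
        exact hKm _ ⟨1, by have := hp.two_le; omega⟩ x
      rw [Set.image_congr' he, Set.image_id']
    · intro L
      apply Subtype.ext
      show (fun x : H => x ^ K ^ 1) '' ((fun x : H => x ^ K ^ (p - 2)) '' L.1) = L.1
      rw [Set.image_image]
      have he : ∀ x : H, (x ^ K ^ (p - 2)) ^ K ^ 1 = x := by
        intro x
        rw [hτcomp]
        exact hKm _ ⟨1, by have := hp.two_le; omega⟩ x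
      rw [Set.image_congr' he, Set.image_id']
  obtain ⟨σS, hσ1⟩ := hσex
  have hiter : ∀ (j : ℕ) (L : S), (((σS ^ j) L) : Set H) = (fun x : H => x ^ K ^ j) '' L.1 := by
    intro j
    induction j with
    | zero =>
      intro L
      have h0 : (σS ^ 0) L = L := by rw [pow_zero]; rfl
      rw [h0]
      have he : ∀ x : H, x ^ K ^ 0 = x := by intro x; simp
      rw [Set.image_congr' he, Set.image_id']
    | succ j ih =>
      intro L
      rw [pow_succ, Equiv.Perm.mul_apply, ih (σS L), hσ1 L, Set.image_image]
      apply Set.image_congr'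
      intro x
      rw [hτcomp]
      congr 2
      omega
  have hfd : σS ^ (p - 1) = 1 := by
    apply Equiv.ext
    intro L
    apply Subtype.ext
    rw [hiter (p - 1) L, show ((1 : Equiv.Perm S) L) = L from rfl,
      Set.image_congr' (fun x => hKm (p - 1) dvd_rfl x), Set.image_id']
  have hfreeS : ∀ j, 0 < j → j < p - 1 → ∀ L : S, (σS ^ j) L ≠ L := by
    intro j hj0 hjlt L hLeq
    have hLfix : (fun x : H => x ^ K ^ j) '' L.1 = L.1 := by
      rw [← hiter j L, hLeq]
    obtain ⟨⟨a, hLa⟩, hLcard⟩ := L.2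
    have hmemmul : ∀ m : ℕ, (fun x : H => x ^ K ^ (j * m)) '' L.1 = L.1 := by
      intro m
      induction m with
      | zero =>
        have he : ∀ x : H, x ^ K ^ (j * 0) = x := by intro x; simp
        rw [Set.image_congr' he, Set.image_id']
      | succ m ih =>
        have hcomb : (fun x : H => x ^ K ^ (j * m)) '' ((fun x : H => x ^ K ^ j) '' L.1)
            = (fun x : H => x ^ K ^ (j * (m + 1))) '' L.1 := by
          rw [Set.image_image]
          apply Set.image_congr'
          intro x
          rw [hτcomp]
          congr 2
          ring
        rw [← hcomb, hLfix, ih]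
    have hmem1 : ∀ (m : ℕ) (x : H), x ∈ L.1 → x ^ K ^ (j * m) ∈ L.1 := by
      intro m x hx
      rw [← hmemmul m]
      exact ⟨x, hx, rfl⟩
    have hQex : ∃ i, 0 < i ∧ ∀ x ∈ L.1, x ^ K ^ (j * i) = x := by
      refine ⟨p - 1, hp1, fun x _ => hKm _ ⟨j, by ring⟩ x⟩
    set d := Nat.find hQex with hd
    obtain ⟨hdpos, hdQ⟩ := Nat.find_spec hQex
    have htrans : ∀ (i : ℕ) (x : H), x ∈ L.1 → x ^ K ^ (j * i) = x →
        ∀ y ∈ L.1, y ^ K ^ (j * i) = y := by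
      intro i x hx hxfix y hy
      have hxo : x ∈ orbitOf α a := hLa ▸ hx
      have hyo : y ∈ orbitOf α x := by
        rw [orbitOf_eq_of_mem α hxo]
        exact hLa ▸ hy
      obtain ⟨g, rfl⟩ := hyo
      rw [← map_pow, hxfix]
    have hfLex : ∃ fL : Equiv.Perm ↥(L.1), ∀ x : ↥(L.1), ((fL x) : H) = x.1 ^ K ^ (j * 1) := by
      have hexp2 : ∀ i : ℕ, j * 1 + j * (p - 2) = (p - 1) * j := by
        intro i
        have h2 := hp.two_le
        zify [h2, hp.pos]
        ring
      refine ⟨⟨fun x => ⟨x.1 ^ K ^ (j * 1), hmem1 1 x.1 x.2⟩,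
        fun x => ⟨x.1 ^ K ^ (j * (p - 2)), hmem1 (p - 2) x.1 x.2⟩, ?_, ?_⟩, fun x => rfl⟩
      · intro x
        apply Subtype.ext
        show (x.1 ^ K ^ (j * 1)) ^ K ^ (j * (p - 2)) = x.1
        rw [hτcomp, hexp2 0]
        exact hKm _ ⟨j, rfl⟩ x.1
      · intro x
        apply Subtype.ext
        show (x.1 ^ K ^ (j * (p - 2))) ^ K ^ (j * 1) = x.1
        rw [hτcomp]
        rw [show j * (p - 2) + j * 1 = (p - 1) * j from by rw [Nat.add_comm]; exact hexp2 0]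
        exact hKm _ ⟨j, rfl⟩ x.1
    obtain ⟨fL, hfL1⟩ := hfLex
    have hfLiter : ∀ (i : ℕ) (x : ↥(L.1)), (((fL ^ i) x) : H) = x.1 ^ K ^ (j * i) := by
      intro i
      induction i with
      | zero => intro x; simp
      | succ i ih =>
        intro x
        rw [pow_succ, Equiv.Perm.mul_apply, ih (fL x), hfL1 x]
        show (x.1 ^ K ^ (j * 1)) ^ K ^ (j * i) = x.1 ^ K ^ (j * (i + 1))
        rw [hτcomp]
        congr 2
        ring
    have hfLd : fL ^ d = 1 := by
      apply Equiv.ext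
      intro x
      apply Subtype.ext
      rw [hfLiter d x, show ((1 : Equiv.Perm ↥(L.1)) x) = x from rfl]
      exact hdQ x.1 x.2
    have hfLfree : ∀ i, 0 < i → i < d → ∀ x : ↥(L.1), (fL ^ i) x ≠ x := by
      intro i hi0 hid x hfix
      have hx : x.1 ^ K ^ (j * i) = x.1 := by
        rw [← hfLiter i x, hfix]
      exact Nat.find_min hQex hid ⟨hi0, htrans i x.1 x.2 hx⟩
    have hdps : d ∣ p ^ s := by
      have := perm_free_dvd_card hdpos fL hfLd hfLfree
      rwa [Nat.card_coe_set_eq, hLcard] at this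
    have hdp1 : d ∣ p - 1 := by
      rcases Nat.eq_zero_or_pos ((p - 1) % d) with hr | hr
      · exact Nat.dvd_of_mod_eq_zero hr
      · exfalso
        have hmul : ∀ m : ℕ, ∀ x ∈ L.1, x ^ K ^ (j * (d * m)) = x := by
          intro m
          induction m with
          | zero => intro x hx; simp
          | succ m ih =>
            intro x hx
            have he : x ^ K ^ (j * (d * (m + 1))) = (x ^ K ^ (j * (d * m))) ^ K ^ (j * d) := by
              rw [hτcomp]
              congr 2
              ring
            rw [he, ih x hx]
            exact hdQ x hx
        have hQr : 0 < (p - 1) % d ∧ ∀ y ∈ L.1, y ^ K ^ (j * ((p - 1) % d)) = y := by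
          refine ⟨hr, fun y hy => ?_⟩
          have h1 : y ^ K ^ (j * (p - 1)) = y := hKm _ ⟨j, by ring⟩ y
          have hsplit : j * (p - 1) = j * (d * ((p - 1) / d)) + j * ((p - 1) % d) := by
            rw [← Nat.mul_add, Nat.div_add_mod]
          rw [hsplit, ← hτcomp, hmul ((p - 1) / d) y hy] at h1
          exact h1
        exact Nat.find_min hQex (Nat.mod_lt _ hdpos) hQr
    have hd1 : d = 1 := by
      have hcop : Nat.Coprime (p ^ s) (p - 1) := ((cop_pred p hp.pos).symm.pow_left s)
      have := Nat.dvd_gcd hdps hdp1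
      rw [Nat.Coprime] at hcop
      rw [hcop] at this
      exact Nat.dvd_one.mp this
    have hQ1 : ∀ x ∈ L.1, x ^ K ^ (j * 1) = x := hd1 ▸ hdQ
    have haL : a ∈ L.1 := hLa ▸ mem_orbitOf_self α a
    have ha1 : a ≠ 1 := by
      rintro rfl
      rw [orbitOf_one α] at hLa
      rw [hLa] at hLcard
      simp at hLcard
      omega
    have hordn : orderOf a ∣ p ^ n := hn ▸ orderOf_dvd_natCard a
    obtain ⟨m, hmle, hm⟩ := (Nat.dvd_prime_pow hp).mp hordn
    have hm0 : m ≠ 0 := by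
      intro h0
      rw [h0, pow_zero] at hm
      exact ha1 (orderOf_eq_one_iff.mp hm)
    have hpord : p ∣ orderOf a := hm ▸ dvd_pow_self p hm0
    have hKj : K ^ (j * 1) ≡ 1 [MOD orderOf a] := by
      have h2 : a ^ K ^ (j * 1) = a ^ 1 := by rw [pow_one]; exact hQ1 a haL
      exact pow_eq_pow_iff_modEq.mp h2
    have hKjp : K ^ j ≡ 1 [MOD p] := by
      have := Nat.ModEq.of_dvd hpord hKj
      simpa using this
    have hKzp : ((K : ZMod p)) ^ j = 1 := by
      have h3 := (ZMod.natCast_eq_natCast_iff _ _ _).mpr hKjp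
      push_cast at h3
      exact h3
    have hdvdj : (p - 1) ∣ j := hKord ▸ orderOf_dvd_of_pow_eq_one hKzp
    have := Nat.le_of_dvd hj0 hdvdj
    omega
  exact perm_free_dvd_card hp1 σS hfd hfreeS

theorem combine1 {p c : ℕ} (hp : p.Prime) (h1 : p ∣ c + 1) (h2 : (p - 1) ∣ c) :
    c ≡ p - 1 [MOD p * (p - 1)] := by
  have h2le := hp.two_le
  rw [Nat.modEq_iff_dvd, Nat.cast_mul, Nat.cast_sub (by omega : 1 ≤ p), Nat.cast_one]
  have hco : IsCoprime (p : ℤ) ((p : ℤ) - 1) := by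
    have h3 := Nat.isCoprime_iff_coprime.mpr ((cop_pred p hp.pos).symm)
    rwa [Nat.cast_sub (by omega : 1 ≤ p), Nat.cast_one] at h3
  have hd1 : (p : ℤ) ∣ ((p : ℤ) - 1 - (c : ℤ)) := by
    have hc1 : ((p : ℤ)) ∣ ((c : ℤ) + 1) := by exact_mod_cast Int.natCast_dvd_natCast.mpr h1
    have he : (p : ℤ) - 1 - (c : ℤ) = (p : ℤ) - ((c : ℤ) + 1) := by ring
    rw [he]
    exact dvd_sub (dvd_refl _) hc1
  have hd2 : ((p : ℤ) - 1) ∣ ((p : ℤ) - 1 - (c : ℤ)) := by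
    have hc2 : ((p - 1 : ℕ) : ℤ) ∣ (c : ℤ) := Int.natCast_dvd_natCast.mpr h2
    rw [Nat.cast_sub (by omega : 1 ≤ p), Nat.cast_one] at hc2
    exact dvd_sub dvd_rfl hc2
  exact hco.mul_dvd hd1 hd2

theorem combine0 {p c : ℕ} (hp : p.Prime) (h1 : p ∣ c) (h2 : (p - 1) ∣ c) :
    c ≡ 0 [MOD p * (p - 1)] := by
  rw [Nat.modEq_zero_iff_dvd]
  exact ((cop_pred p hp.pos).symm).mul_dvd_of_dvd_of_dvd h1 h2



theorem stmt_9 {G H : Type*} [Group G] [Group H] [Finite G] [Finite H]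
    {p : ℕ} (hp : p.Prime) (hG : IsPGroup p G) (hH : IsPGroup p H)
    (α : G →* MulAut H) (s : ℕ)
    (hex : ∃ a : H, 1 < (orbitOf α a).ncard ∧ (orbitOf α a).ncard = p ^ s)
    (hmin : ∀ b : H, 1 < (orbitOf α b).ncard → p ^ s ≤ (orbitOf α b).ncard) :
    Xor'
      (Nat.card {h : H // ∀ g : G, α g h = h} = p ^ s ∧
        Nat.card {L : Set H // (∃ a : H, L = orbitOf α a) ∧ L.ncard = p ^ s} ≡
          p - 1 [MOD p * (p - 1)])
      (p ^ s < Nat.card {h : H // ∀ g : G, α g h = h} ∧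
        Nat.card {L : Set H // (∃ a : H, L = orbitOf α a) ∧ L.ncard = p ^ s} ≡
          0 [MOD p * (p - 1)]) := by
  classical
  haveI : Fact p.Prime := ⟨hp⟩
  haveI : Fintype H := Fintype.ofFinite H
  obtain ⟨a₀, ha₀1, ha₀⟩ := hex
  have hs1 : 1 < p ^ s := ha₀ ▸ ha₀1
  obtain ⟨n, hn⟩ := IsPGroup.iff_card.mp hH
  obtain ⟨k, hk⟩ := IsPGroup.iff_card.mp hG
  have horbpow : ∀ b : H, ∃ m : ℕ, (orbitOf α b).ncard = p ^ m := by
    intro b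
    have hdvd : (orbitOf α b).ncard ∣ p ^ k := hk ▸ ncard_orbitOf_dvd α b
    obtain ⟨m, _, hm⟩ := (Nat.dvd_prime_pow hp).mp hdvd
    exact ⟨m, hm⟩
  -- Finset of orbits
  set T : Finset (Set H) := Finset.image (fun a : H => orbitOf α a) Finset.univ with hT
  have hmemT : ∀ L : Set H, L ∈ T ↔ ∃ a : H, L = orbitOf α a := by
    intro L
    simp only [hT, Finset.mem_image, Finset.mem_univ, true_and]
    exact ⟨fun ⟨a, ha⟩ => ⟨a, ha.symm⟩, fun ⟨a, ha⟩ => ⟨a, ha.symm⟩⟩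
  have hcardsum : Fintype.card H
      = ∑ L ∈ T, (Finset.univ.filter fun a : H => orbitOf α a = L).card := by
    rw [← Finset.card_univ]
    exact Finset.card_eq_sum_card_fiberwise
      (fun a _ => Finset.mem_image_of_mem _ (Finset.mem_univ a))
  have hfibercard : ∀ L ∈ T,
      (Finset.univ.filter fun a : H => orbitOf α a = L).card = L.ncard := by
    intro L hL
    obtain ⟨b, rfl⟩ := (hmemT L).mp hL
    haveI : Fintype ↥(orbitOf α b) := Fintype.ofFinite _
    rw [Set.ncard_eq_toFinset_card']
    congr 1
    ext x
    simp only [Finset.mem_filter, Finset.mem_univ, true_and, Set.mem_toFinset]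
    constructor
    · intro h; rw [← h]; exact mem_orbitOf_self α x
    · intro h; exact orbitOf_eq_of_mem α h
  have hsum2 : Fintype.card H = ∑ L ∈ T, L.ncard := by
    rw [hcardsum]
    exact Finset.sum_congr rfl hfibercard
  set T1 := T.filter (fun L : Set H => L.ncard = 1) with hT1
  set Ts := T.filter (fun L : Set H => L.ncard = p ^ s) with hTsdef
  set Tb := T.filter (fun L : Set H => ¬(L.ncard = 1 ∨ L.ncard = p ^ s)) with hTb
  have hsplit : ∑ L ∈ T, L.ncard
      = ((∑ L ∈ T1, L.ncard) + (∑ L ∈ Ts, L.ncard)) + (∑ L ∈ Tb, L.ncard) := by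
    rw [← Finset.sum_filter_add_sum_filter_not T
      (fun L : Set H => L.ncard = 1 ∨ L.ncard = p ^ s)]
    congr 1
    rw [Finset.filter_or, Finset.sum_union]
    rw [Finset.disjoint_left]
    intro L hL1 hLs
    rw [Finset.mem_filter] at hL1 hLs
    omega
  have hT1sum : ∑ L ∈ T1, L.ncard = T1.card := by
    rw [Finset.sum_congr rfl (fun L hL => (Finset.mem_filter.mp hL).2), Finset.sum_const,
      smul_eq_mul, mul_one]
  have hTssum : ∑ L ∈ Ts, L.ncard = Ts.card * p ^ s := by
    rw [Finset.sum_congr rfl (fun L hL => (Finset.mem_filter.mp hL).2), Finset.sum_const,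
      smul_eq_mul]
  set F := Nat.card {h : H // ∀ g : G, α g h = h} with hF
  set c := Nat.card {L : Set H // (∃ a : H, L = orbitOf α a) ∧ L.ncard = p ^ s} with hc
  have hcT : c = Ts.card := by
    rw [hc, ← Nat.card_eq_finsetCard Ts]
    apply Nat.card_congr
    apply Equiv.subtypeEquivRight
    intro L
    rw [hTsdef, Finset.mem_filter, hmemT L]
  have hFT1 : F = T1.card := by
    rw [hF, Nat.card_eq_fintype_card, Fintype.card_subtype]
    apply Finset.card_bij (fun (h : H) _ => orbitOf α h)
    · intro h hh
      simp only [Finset.mem_filter, Finset.mem_univ, true_and] at hh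
      rw [hT1, Finset.mem_filter]
      refine ⟨(hmemT _).mpr ⟨h, rfl⟩, ?_⟩
      rw [(orbitOf_eq_singleton_iff α).mpr hh]
      simp
    · intro h1 hh1 h2 hh2 heq
      simp only [Finset.mem_filter, Finset.mem_univ, true_and] at hh1 hh2
      rw [(orbitOf_eq_singleton_iff α).mpr hh1, (orbitOf_eq_singleton_iff α).mpr hh2] at heq
      exact Set.singleton_eq_singleton_iff.mp heq
    · intro L hL
      rw [hT1, Finset.mem_filter] at hL
      obtain ⟨hLT, hL1⟩ := hL
      obtain ⟨b, rfl⟩ := (hmemT L).mp hLT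
      have hsing : orbitOf α b = {b} := by
        obtain ⟨x, hx⟩ := Set.ncard_eq_one.mp hL1
        have hbmem : b ∈ orbitOf α b := mem_orbitOf_self α b
        rw [hx] at hbmem ⊢
        rw [Set.mem_singleton_iff.mp hbmem]
      refine ⟨b, ?_, rfl⟩
      simp only [Finset.mem_filter, Finset.mem_univ, true_and]
      exact (orbitOf_eq_singleton_iff α).mp hsing
  -- F is a power of p
  have hsubF : ∃ t : ℕ, F = p ^ t := by
    let Kfix : Subgroup H :=
      { carrier := {h : H | ∀ g : G, α g h = h}
        one_mem' := fun g => map_one (α g)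
        mul_mem' := by
          intro x y hx hy g
          rw [map_mul, hx g, hy g]
        inv_mem' := by
          intro x hx g
          rw [map_inv, hx g] }
    have hFK : F = Nat.card Kfix := rfl
    have hdvd : Nat.card Kfix ∣ p ^ n := hn ▸ Subgroup.card_subgroup_dvd_card Kfix
    obtain ⟨t, _, ht⟩ := (Nat.dvd_prime_pow hp).mp hdvd
    exact ⟨t, by rw [hFK, ht]⟩
  obtain ⟨t, hFt⟩ := hsubF
  have hFpos : 0 < F := by
    haveI : Nonempty {h : H // ∀ g : G, α g h = h} := ⟨⟨1, fun g => map_one (α g)⟩⟩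
    exact Nat.card_pos
  have hcpos : 0 < c := by
    rw [hcT]
    apply Finset.card_pos.mpr
    refine ⟨orbitOf α a₀, ?_⟩
    rw [hTsdef, Finset.mem_filter]
    exact ⟨(hmemT _).mpr ⟨a₀, rfl⟩, ha₀⟩
  have hTbdvd : ∀ L ∈ Tb, p ^ (s + 1) ∣ L.ncard := by
    intro L hL
    rw [hTb, Finset.mem_filter] at hL
    obtain ⟨hLT, hLnot⟩ := hL
    push_neg at hLnot
    obtain ⟨hL1, hLps⟩ := hLnot
    obtain ⟨b, rfl⟩ := (hmemT L).mp hLT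
    obtain ⟨m, hm⟩ := horbpow b
    have h1 : 1 < (orbitOf α b).ncard := by
      have hpos : 0 < (orbitOf α b).ncard := hm ▸ pow_pos hp.pos m
      omega
    have hge := hmin b h1
    rw [hm] at hge hLps ⊢
    have hsm : s < m := by
      have h2 : s ≤ m := (Nat.pow_le_pow_iff_right hp.one_lt).mp hge
      rcases h2.lt_or_eq with h3 | h3
      · exact h3
      · exact absurd (by rw [h3]) hLps
    exact pow_dvd_pow p hsm
  have hRdvd : p ^ (s + 1) ∣ ∑ L ∈ Tb, L.ncard := Finset.dvd_sum hTbdvd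
  set R := ∑ L ∈ Tb, L.ncard with hR
  have hEq : p ^ n = F + c * p ^ s + R := by
    have h1 : Fintype.card H = p ^ n := by rw [← Nat.card_eq_fintype_card, hn]
    rw [← h1, hsum2, hsplit, hT1sum, hTssum, ← hFT1, ← hcT]
  have hsn : s < n := by
    have h1 : p ^ s < p ^ n := by
      have h2 : p ^ s ≤ c * p ^ s := Nat.le_mul_of_pos_left _ hcpos
      omega
    exact (Nat.pow_lt_pow_iff_right hp.one_lt).mp h1
  have hsF : p ^ s ∣ F := by
    have h2 : F = p ^ n - (c * p ^ s + R) := by omega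
    rw [h2]
    apply Nat.dvd_sub
    · exact pow_dvd_pow p (le_of_lt hsn)
    · apply Nat.dvd_add
      · exact dvd_mul_left (p ^ s) c
      · exact dvd_trans (pow_dvd_pow p (Nat.le_succ s)) hRdvd
  have hst : s ≤ t := by
    rw [hFt] at hsF
    exact (Nat.pow_dvd_pow_iff_le_right hp.one_lt).mp hsF
  have hcard1 : 1 < Nat.card H := by
    rw [hn]
    exact Nat.one_lt_pow (by omega) hp.one_lt
  have hkeydvd : (p - 1) ∣ c := key_dvd hp hH α s hs1 hcard1
  rcases eq_or_lt_of_le hst with hEqt | hLtt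
  · -- F = p ^ s
    have hFps : F = p ^ s := by rw [hFt, ← hEqt]
    have hpc1 : p ∣ c + 1 := by
      have hd : p ^ (s + 1) ∣ p ^ s * (c + 1) := by
        have h2 : p ^ s * (c + 1) = p ^ n - R := by
          rw [hFps] at hEq
          have h3 : p ^ s * (c + 1) = p ^ s + c * p ^ s := by ring
          omega
        rw [h2]
        apply Nat.dvd_sub
        · exact pow_dvd_pow p hsn
        · exact hRdvd
      rw [pow_succ] at hd
      exact (Nat.mul_dvd_mul_iff_left (pow_pos hp.pos s)).mp hd
    refine Or.inl ⟨⟨hFps, combine1 hp hpc1 hkeydvd⟩, ?_⟩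
    intro hB
    rw [hFps] at hB
    exact lt_irrefl _ hB.1
  · -- p ^ s < F
    have hFgt : p ^ s < F := by
      rw [hFt]
      exact Nat.pow_lt_pow_right hp.one_lt hLtt
    have hpc : p ∣ c := by
      have hd : p ^ (s + 1) ∣ c * p ^ s := by
        have h2 : c * p ^ s = p ^ n - F - R := by omega
        rw [h2]
        apply Nat.dvd_sub
        · apply Nat.dvd_sub
          · exact pow_dvd_pow p hsn
          · rw [hFt]
            exact pow_dvd_pow p hLtt
        · exact hRdvd
      have h5 : p ^ s * p ∣ p ^ s * c := by
        have e1 : p ^ s * p = p ^ (s + 1) := (pow_succ p s).symm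
        have e2 : p ^ s * c = c * p ^ s := by ring
        rw [e1, e2]
        exact hd
      exact (Nat.mul_dvd_mul_iff_left (pow_pos hp.pos s)).mp h5
    refine Or.inr ⟨⟨hFgt, combine0 hp hpc hkeydvd⟩, ?_⟩
    intro hA
    rw [hA.1] at hFgt
    exact lt_irrefl _ hFgt
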